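/- arXiv:2312.08812 — 3 statements merged into one kernel-verified Lean document; each statement's English description precedes it below -/
import Mathlib

section
/- Let T₁, T₂ be doubly commuting contractions on a Hilbert space H. Then the subspace H_u = ⋂_{k≥0} [ker(I - T₁*ᵏT₁ᵏ) ∩ ker(I - T₁ᵏT₁*ᵏ)] is a reducing subspace for T₂. -/
open ContinuousLinearMap

/-- The unitary part subspace of the canonical decomposition of a contraction `T`. -/
noncomputable def unitaryPart {H : Type*} [NormedAddCommGroup H] [InnerProductSpace ℂ H]
    [CompleteSpace H] (T : H →L[ℂ] H) : Set H :=
  ⋂ k : ℕ, ((LinearMap.ker (((1 : H →L[ℂ] H) - (adjoint T) ^ k * T ^ k : H →L[ℂ] H) : H →ₗ[ℂ] H) : Set H) ∩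
    (LinearMap.ker (((1 : H →L[ℂ] H) - T ^ k * (adjoint T) ^ k : H →L[ℂ] H) : H →ₗ[ℂ] H) : Set H))

private lemma ker_stable {H : Type*} [NormedAddCommGroup H] [InnerProductSpace ℂ H]
    [CompleteSpace H] (S A : H →L[ℂ] H) (hSA : A * S = S * A) {x : H}
    (hx : x ∈ LinearMap.ker (((1 : H →L[ℂ] H) - A : H →L[ℂ] H) : H →ₗ[ℂ] H)) :
    S x ∈ LinearMap.ker (((1 : H →L[ℂ] H) - A : H →L[ℂ] H) : H →ₗ[ℂ] H) := by
  rw [LinearMap.mem_ker] at hx ⊢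
  simp only [ContinuousLinearMap.coe_coe] at hx ⊢
  have key : ((1 : H →L[ℂ] H) - A) (S x) = S (((1 : H →L[ℂ] H) - A) x) := by
    have hAS : A (S x) = S (A x) := by
      have := congrFun (congrArg DFunLike.coe hSA) x
      simpa [ContinuousLinearMap.mul_apply] using this
    simp [ContinuousLinearMap.sub_apply, ContinuousLinearMap.one_apply, hAS, map_sub]
  rw [key, hx, map_zero]

private lemma unitaryPart_stable {H : Type*} [NormedAddCommGroup H] [InnerProductSpace ℂ H]
    [CompleteSpace H] (T₁ S : H →L[ℂ] H)
    (hc : T₁ * S = S * T₁) (hdc : adjoint T₁ * S = S * adjoint T₁) :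
    ∀ x ∈ unitaryPart T₁, S x ∈ unitaryPart T₁ := by
  intro x hx
  rw [unitaryPart, Set.mem_iInter] at hx ⊢
  intro k
  obtain ⟨hx1, hx2⟩ := hx k
  have c1 : Commute T₁ S := hc
  have c2 : Commute (adjoint T₁) S := hdc
  have hA : (adjoint T₁ ^ k * T₁ ^ k) * S = S * (adjoint T₁ ^ k * T₁ ^ k) :=
    ((c2.pow_left k).mul_left (c1.pow_left k)).eq
  have hB : (T₁ ^ k * adjoint T₁ ^ k) * S = S * (T₁ ^ k * adjoint T₁ ^ k) :=
    ((c1.pow_left k).mul_left (c2.pow_left k)).eq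
  exact ⟨ker_stable S _ hA hx1, ker_stable S _ hB hx2⟩

theorem stmt_8 {H : Type*} [NormedAddCommGroup H] [InnerProductSpace ℂ H] [CompleteSpace H]
    (T₁ T₂ : H →L[ℂ] H) (h1 : ‖T₁‖ ≤ 1) (h2 : ‖T₂‖ ≤ 1)
    (hc : T₁ * T₂ = T₂ * T₁) (hdc : adjoint T₁ * T₂ = T₂ * adjoint T₁) :
    ∀ x ∈ unitaryPart T₁, T₂ x ∈ unitaryPart T₁ ∧ adjoint T₂ x ∈ unitaryPart T₁ := by
  intro x hx
  have hc' : T₁ * adjoint T₂ = adjoint T₂ * T₁ := by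
    have h := congrArg adjoint hdc
    rw [ContinuousLinearMap.mul_def, ContinuousLinearMap.mul_def, adjoint_comp, adjoint_comp,
      adjoint_adjoint] at h
    exact h.symm
  have hdc' : adjoint T₁ * adjoint T₂ = adjoint T₂ * adjoint T₁ := by
    have h := congrArg adjoint hc
    rw [ContinuousLinearMap.mul_def, ContinuousLinearMap.mul_def, adjoint_comp, adjoint_comp] at h
    exact h.symm
  exact ⟨unitaryPart_stable T₁ T₂ hc hdc x hx,
    unitaryPart_stable T₁ (adjoint T₂) hc' hdc' x hx⟩
end

section
/- With S the bilateral shift S wₙ = w_{n+1} on the weighted basis {wₙ}_{n∈ℤ} with ‖wₙ‖² = 1 + r^{2(α+n)} (0 < r < 1, 0 ≤ α < 1), the operators V₁ = S and V₂ = S² commute but do not doubly commute: V₁V₂*(w₀) = c(0)c(-1) w₋₁ while V₂*V₁(w₀) = c(1)c(0) w₋₁, and c(-1) ≠ c(1), where c(n) = (1 + r^{2(α+n)})/(1 + r^{2(α+n-1)}). -/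
open ContinuousLinearMap

/-- The weight `c(n) = (1 + r^{2(α+n)})/(1 + r^{2(α+n-1)})` appearing in the adjoint of the
weighted bilateral shift. -/
noncomputable def shiftWeight (r α : ℝ) (n : ℤ) : ℝ :=
  (1 + r ^ (2 * (α + (n : ℝ)))) / (1 + r ^ (2 * (α + (n : ℝ) - 1)))

lemma ext_of_inner_basis {H : Type*} [NormedAddCommGroup H] [InnerProductSpace ℂ H]
    (w : ℤ → H) (hdense : Dense ((Submodule.span ℂ (Set.range w)) : Set H))
    (x y : H) (h : ∀ n : ℤ, (inner ℂ x (w n) : ℂ) = inner ℂ y (w n)) : x = y := by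
  refine hdense.eq_of_inner_left ℂ fun v hv => ?_
  have hsub : Set.range w ⊆ ((LinearMap.ker (((innerSL ℂ x : H →L[ℂ] ℂ) - innerSL ℂ y : H →L[ℂ] ℂ) : H →ₗ[ℂ] ℂ) : Submodule ℂ H) : Set H) := by
    rintro _ ⟨n, rfl⟩
    simp [sub_eq_zero, h n]
  have hker := Submodule.span_le.mpr hsub
  have := hker hv
  simpa [sub_eq_zero] using this

theorem stmt_15 {H : Type*} [NormedAddCommGroup H] [InnerProductSpace ℂ H] [CompleteSpace H]
    (r α : ℝ) (hr0 : 0 < r) (hr1 : r < 1) (hα0 : 0 ≤ α) (hα1 : α < 1)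
    (w : ℤ → H)
    (horth : ∀ m n : ℤ, m ≠ n → (inner ℂ (w m) (w n) : ℂ) = 0)
    (hnorm : ∀ n : ℤ, ‖w n‖ ^ 2 = 1 + r ^ (2 * (α + (n : ℝ))))
    (hdense : Dense ((Submodule.span ℂ (Set.range w)) : Set H))
    (S : H →L[ℂ] H) (hS : ∀ n : ℤ, S (w n) = w (n + 1)) :
    (S ((adjoint (S ^ 2)) (w 0)) =
        (((shiftWeight r α 0 * shiftWeight r α (-1)) : ℝ) : ℂ) • w (-1)) ∧
    ((adjoint (S ^ 2)) (S (w 0)) =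
        (((shiftWeight r α 1 * shiftWeight r α 0) : ℝ) : ℂ) • w (-1)) ∧
    shiftWeight r α (-1) ≠ shiftWeight r α 1 ∧
    S * adjoint (S ^ 2) ≠ adjoint (S ^ 2) * S := by
  have hpow : ∀ t : ℝ, (0:ℝ) < 1 + r ^ t := fun t => by positivity
  have hne : ∀ t : ℝ, (1 + r ^ t : ℝ) ≠ 0 := fun t => (hpow t).ne'
  have hnormsq_pos : ∀ n : ℤ, (0:ℝ) < ‖w n‖ ^ 2 := fun n => by
    rw [hnorm n]; exact hpow _
  have hwne : ∀ n : ℤ, w n ≠ 0 := by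
    intro n hn
    have := hnormsq_pos n
    rw [hn] at this; simp at this
  have hS2 : ∀ n : ℤ, (S ^ 2) (w n) = w (n + 2) := by
    intro n
    rw [pow_two, ContinuousLinearMap.mul_apply, hS, hS]
    norm_num
    ring_nf
  have hadj : ∀ m : ℤ, (adjoint (S ^ 2)) (w m) =
      ((((‖w m‖ ^ 2) / (‖w (m - 2)‖ ^ 2) : ℝ)) : ℂ) • w (m - 2) := by
    intro m
    refine ext_of_inner_basis w hdense _ _ fun n => ?_
    rw [ContinuousLinearMap.adjoint_inner_left, hS2, inner_smul_left]
    by_cases hmn : n + 2 = m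
    · have hn : n = m - 2 := by omega
      subst hn
      rw [hmn]
      rw [inner_self_eq_norm_sq_to_K, inner_self_eq_norm_sq_to_K]
      have h2 : ((‖w (m - 2)‖ : ℂ)) ^ 2 ≠ 0 := by
        norm_cast
        exact (hnormsq_pos (m - 2)).ne'
      push_cast
      field_simp
      rw [map_div₀, map_pow, map_pow, Complex.conj_ofReal, Complex.conj_ofReal]
      exact (div_mul_cancel₀ _ h2).symm
    · rw [horth m (n + 2) (fun h => hmn h.symm), horth (m - 2) n (by omega)]
      simp
  -- scalar identities
  have hc1 : (‖w 0‖ ^ 2) / (‖w (-2)‖ ^ 2) = shiftWeight r α 0 * shiftWeight r α (-1) := by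
    unfold shiftWeight
    rw [hnorm, hnorm]
    push_cast
    rw [show (2 * (α + (-1:ℝ) - 1)) = 2 * (α + (-2:ℝ)) from by ring,
      show (2 * (α + (0:ℝ) - 1)) = 2 * (α + (-1:ℝ)) from by ring]
    field_simp
  have hc2 : (‖w 1‖ ^ 2) / (‖w (-1)‖ ^ 2) = shiftWeight r α 1 * shiftWeight r α 0 := by
    unfold shiftWeight
    rw [hnorm, hnorm]
    push_cast
    rw [show (2 * (α + (0:ℝ) - 1)) = 2 * (α + (-1:ℝ)) from by ring,
      show (2 * (α + (1:ℝ) - 1)) = 2 * (α + (0:ℝ)) from by ring]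
    field_simp
  have key1 : S ((adjoint (S ^ 2)) (w 0)) =
      (((shiftWeight r α 0 * shiftWeight r α (-1)) : ℝ) : ℂ) • w (-1) := by
    rw [hadj 0, map_smul, hS, ← hc1]
    norm_num
  have key2 : (adjoint (S ^ 2)) (S (w 0)) =
      (((shiftWeight r α 1 * shiftWeight r α 0) : ℝ) : ℂ) • w (-1) := by
    rw [hS 0, show (0:ℤ) + 1 = 1 from rfl, hadj 1, show (1:ℤ) - 2 = -1 from rfl, hc2]
  -- strict inequality of weights
  have hlt : shiftWeight r α (-1) < shiftWeight r α 1 := by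
    unfold shiftWeight
    push_cast
    rw [show (2 * (α + (-1:ℝ))) = (2*α - 4) + (2:ℝ) from by ring,
      show (2 * (α + (-1:ℝ) - 1)) = (2*α - 4) + (0:ℝ) from by ring,
      show (2 * (α + (1:ℝ))) = (2*α - 4) + (6:ℝ) from by ring,
      show (2 * (α + (1:ℝ) - 1)) = (2*α - 4) + (4:ℝ) from by ring]
    rw [Real.rpow_add hr0, Real.rpow_add hr0, Real.rpow_add hr0, Real.rpow_add hr0]
    set t := r ^ (2*α - 4 : ℝ) with ht
    have ht0 : 0 < t := Real.rpow_pos_of_pos hr0 _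
    have h2 : r ^ (2:ℝ) = r ^ (2:ℕ) := by
      rw [← Real.rpow_natCast]; norm_num
    have h0 : r ^ (0:ℝ) = 1 := Real.rpow_zero r
    have h6 : r ^ (6:ℝ) = r ^ (6:ℕ) := by
      rw [← Real.rpow_natCast]; norm_num
    have h4 : r ^ (4:ℝ) = r ^ (4:ℕ) := by
      rw [← Real.rpow_natCast]; norm_num
    rw [h2, h0, h6, h4]
    rw [div_lt_div_iff₀ (by positivity) (by positivity)]
    have hr2 : r ^ 2 < 1 := pow_lt_one₀ hr0.le hr1 (by norm_num)
    have hr4 : r ^ 4 < 1 := pow_lt_one₀ hr0.le hr1 (by norm_num)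
    nlinarith [mul_pos (mul_pos ht0 (sub_pos.mpr hr2)) (sub_pos.mpr hr4)]
  have hne13 : shiftWeight r α (-1) ≠ shiftWeight r α 1 := ne_of_lt hlt
  refine ⟨key1, key2, hne13, ?_⟩
  intro heq
  have happ : S ((adjoint (S ^ 2)) (w 0)) = (adjoint (S ^ 2)) (S (w 0)) := by
    have := congrArg (fun T : H →L[ℂ] H => T (w 0)) heq
    simpa using this
  rw [key1, key2] at happ
  have hsc : (((shiftWeight r α 0 * shiftWeight r α (-1)) : ℝ) : ℂ) =
      (((shiftWeight r α 1 * shiftWeight r α 0) : ℝ) : ℂ) := by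
    by_contra hne'
    have := sub_smul (((shiftWeight r α 0 * shiftWeight r α (-1)) : ℝ) : ℂ)
      (((shiftWeight r α 1 * shiftWeight r α 0) : ℝ) : ℂ) (w (-1))
    rw [sub_eq_zero.mpr happ] at this
    exact hwne (-1) ((smul_eq_zero.mp this).resolve_left (sub_ne_zero.mpr hne'))
  have hscR : shiftWeight r α 0 * shiftWeight r α (-1) =
      shiftWeight r α 1 * shiftWeight r α 0 := by exact_mod_cast hsc
  have hc0 : shiftWeight r α 0 ≠ 0 := by
    unfold shiftWeight
    positivity
  apply hne13
  have := mul_left_cancel₀ hc0 (by linarith [hscR] : shiftWeight r α 0 * shiftWeight r α (-1) =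
    shiftWeight r α 0 * shiftWeight r α 1)
  exact this
end

section
/- Let T₁, T₂ be doubly commuting bounded operators on a Hilbert space H and let L ⊆ H be a closed subspace reducing T₁ such that -T₁*²T₁²x + (1+r²)T₁*T₁x - r²x = 0 for all x ∈ L. Then the closure of T₂(L) is a closed subspace reducing T₁ on which the same identity holds: -T₁*²T₁²y + (1+r²)T₁*T₁y - r²y = 0 for all y in the closure of T₂(L). -/
open ContinuousLinearMap

theorem stmt_17 {H : Type*} [NormedAddCommGroup H] [InnerProductSpace ℂ H] [CompleteSpace H]
    (T₁ T₂ : H →L[ℂ] H) (r : ℝ) (hr0 : 0 < r) (hr1 : r < 1)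
    (hc : T₁ * T₂ = T₂ * T₁) (hdc : adjoint T₁ * T₂ = T₂ * adjoint T₁)
    (L : Submodule ℂ H) (hL : IsClosed (L : Set H))
    (hT₁L : ∀ x ∈ L, T₁ x ∈ L) (hT₁aL : ∀ x ∈ L, adjoint T₁ x ∈ L)
    (hid : ∀ x ∈ L, -((adjoint T₁) ^ 2) ((T₁ ^ 2) x) +
      ((1 : ℂ) + (r : ℂ) ^ 2) • (adjoint T₁) (T₁ x) - ((r : ℂ) ^ 2) • x = 0) :
    (∀ y ∈ (Submodule.map (T₂ : H →ₗ[ℂ] H) L).topologicalClosure,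
        T₁ y ∈ (Submodule.map (T₂ : H →ₗ[ℂ] H) L).topologicalClosure) ∧
    (∀ y ∈ (Submodule.map (T₂ : H →ₗ[ℂ] H) L).topologicalClosure,
        adjoint T₁ y ∈ (Submodule.map (T₂ : H →ₗ[ℂ] H) L).topologicalClosure) ∧
    ∀ y ∈ (Submodule.map (T₂ : H →ₗ[ℂ] H) L).topologicalClosure,
      -((adjoint T₁) ^ 2) ((T₁ ^ 2) y) + ((1 : ℂ) + (r : ℂ) ^ 2) • (adjoint T₁) (T₁ y) -
        ((r : ℂ) ^ 2) • y = 0 := by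
  -- pointwise commuting relations
  have hc' : ∀ v, T₁ (T₂ v) = T₂ (T₁ v) := fun v => DFunLike.congr_fun hc v
  have hdc' : ∀ v, adjoint T₁ (T₂ v) = T₂ (adjoint T₁ v) := fun v => DFunLike.congr_fun hdc v
  set M := (Submodule.map (T₂ : H →ₗ[ℂ] H) L).topologicalClosure with hM
  have hmemM : ∀ y, y ∈ M ↔ y ∈ closure ((Submodule.map (T₂ : H →ₗ[ℂ] H) L : Set H)) := fun y => Iff.rfl
  have hmapsT₁ : Set.MapsTo T₁ (Submodule.map (T₂ : H →ₗ[ℂ] H) L : Set H) (Submodule.map (T₂ : H →ₗ[ℂ] H) L : Set H) := by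
    rintro z ⟨x, hx, rfl⟩
    exact ⟨T₁ x, hT₁L x hx, (hc' x).symm⟩
  have hmapsT₁a : Set.MapsTo (adjoint T₁) (Submodule.map (T₂ : H →ₗ[ℂ] H) L : Set H)
      (Submodule.map (T₂ : H →ₗ[ℂ] H) L : Set H) := by
    rintro z ⟨x, hx, rfl⟩
    exact ⟨adjoint T₁ x, hT₁aL x hx, (hdc' x).symm⟩
  refine ⟨fun y hy => ?_, fun y hy => ?_, fun y hy => ?_⟩
  · exact map_mem_closure T₁.continuous hy hmapsT₁
  · exact map_mem_closure (adjoint T₁).continuous hy hmapsT₁a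
  · -- the operator expressing the identity
    set F : H →L[ℂ] H :=
      -(((adjoint T₁) ^ 2).comp (T₁ ^ 2)) + ((1 : ℂ) + (r : ℂ) ^ 2) • ((adjoint T₁).comp T₁)
        - ((r : ℂ) ^ 2) • (1 : H →L[ℂ] H) with hF
    have hFapp : ∀ v, F v = -((adjoint T₁) ^ 2) ((T₁ ^ 2) v) +
        ((1 : ℂ) + (r : ℂ) ^ 2) • (adjoint T₁) (T₁ v) - ((r : ℂ) ^ 2) • v := by
      intro v; simp [hF]
    have hFT₂ : ∀ v, F (T₂ v) = T₂ (F v) := by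
      intro v
      have h1 : (T₁ ^ 2) (T₂ v) = T₂ ((T₁ ^ 2) v) := by
        simp only [pow_two, mul_apply_eq_comp, hc' v, hc' (T₁ v)]
      have h2 : ∀ w, ((adjoint T₁) ^ 2) (T₂ w) = T₂ (((adjoint T₁) ^ 2) w) := by
        intro w
        simp only [pow_two, mul_apply_eq_comp]
        rw [hdc', hdc']
      rw [hFapp, hFapp, h1, h2, hc' v, hdc' (T₁ v)]
      simp [map_add, map_sub, map_neg, map_smul]
    have hker : (Submodule.map (T₂ : H →ₗ[ℂ] H) L : Set H) ⊆ F ⁻¹' {0} := by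
      rintro z ⟨x, hx, rfl⟩
      have := hid x hx
      simp only [Set.mem_preimage, Set.mem_singleton_iff, coe_coe, hFT₂ x, hFapp x, this, map_zero]
    have hclosed : IsClosed (F ⁻¹' {0} : Set H) :=
      IsClosed.preimage F.continuous isClosed_singleton
    have : y ∈ F ⁻¹' {0} := (closure_minimal hker hclosed) hy
    rw [← hFapp]
    exact this
end
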